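/- arXiv:2507.22718 — 2 statements merged into one kernel-verified Lean document; each statement's English description precedes it below -/
import Mathlib

section
/- Let $n = 1$ and let $P \in \mathbb{C}[X]$ be a non-constant polynomial of degree $d$ with leading coefficient $a_d \neq 0$. Then for all $\delta > 0$, the Lebesgue measure of $\{\theta \in [0,2\pi] : |P(e^{i\theta})| < \delta\}$ is at most $C (\delta/|a_d|)^{1/d}$ for some absolute constant $C$ depending only on $d$. -/
open MeasureTheory Complex

-- chord formula
lemma chord_eq (a b : ℝ) :
    ‖Complex.exp (a * Complex.I) - Complex.exp (b * Complex.I)‖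
      = 2 * |Real.sin ((a - b) / 2)| := by
  have key : Complex.exp (a * Complex.I) - Complex.exp (b * Complex.I)
      = Complex.exp ((((a + b) / 2 : ℝ)) * Complex.I)
        * (2 * Complex.I * Complex.sin (((a - b) / 2 : ℝ))) := by
    have e1 : (a : ℂ) * Complex.I
        = (((a + b) / 2 : ℝ)) * Complex.I + (((a - b) / 2 : ℝ) : ℂ) * Complex.I := by
      push_cast; ring
    have e2 : (b : ℂ) * Complex.I
        = (((a + b) / 2 : ℝ)) * Complex.I + -((((a - b) / 2 : ℝ)) : ℂ) * Complex.I := by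
      push_cast; ring
    rw [e1, e2, Complex.exp_add, Complex.exp_add, Complex.sin]
    ring_nf
    rw [Complex.I_sq]
    ring
  rw [key, norm_mul, Complex.norm_exp_ofReal_mul_I, one_mul, norm_mul, norm_mul,
    Complex.norm_two, Complex.norm_I, ← Complex.ofReal_sin, Complex.norm_real, Real.norm_eq_abs, mul_one]

lemma sin_small (u ε : ℝ) (hu : |u| ≤ Real.pi) (hε : 0 < ε)
    (h : |Real.sin u| < ε) :
    |u| < Real.pi * ε / 2 ∨ |u - Real.pi| < Real.pi * ε / 2 ∨
      |u + Real.pi| < Real.pi * ε / 2 := by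
  have hπ := Real.pi_pos
  have key : 2 / Real.pi * (Real.pi * ε / 2) = ε := by field_simp
  by_contra hc
  push_neg at hc
  obtain ⟨h1, h2, h3⟩ := hc
  rcases le_or_gt (|u|) (Real.pi / 2) with hle | hgt
  · have hs := Real.mul_abs_le_abs_sin hle
    have : ε ≤ 2 / Real.pi * |u| := by
      rw [← key]; exact mul_le_mul_of_nonneg_left h1 (by positivity)
    linarith
  · rcases le_or_gt 0 u with hu0 | hu0
    · rw [_root_.abs_of_nonneg hu0] at hu hgt
      have hsu : Real.sin u = Real.sin (Real.pi - u) := (Real.sin_pi_sub u).symm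
      have h2' : Real.pi * ε / 2 ≤ Real.pi - u := by
        rw [abs_sub_comm, _root_.abs_of_nonneg (by linarith)] at h2; linarith
      have hb : |Real.pi - u| ≤ Real.pi / 2 := by
        rw [_root_.abs_of_nonneg (by linarith)]; linarith
      have hs := Real.mul_abs_le_abs_sin hb
      rw [← hsu] at hs
      have : ε ≤ 2 / Real.pi * |Real.pi - u| := by
        rw [← key]
        exact mul_le_mul_of_nonneg_left
          (by rw [_root_.abs_of_nonneg (by linarith)]; exact h2') (by positivity)
      linarith
    · have hu' : -u ≤ Real.pi := by
        rw [_root_.abs_of_neg hu0] at hu; exact hu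
      rw [_root_.abs_of_neg hu0] at hgt
      have hsu : Real.sin u = -Real.sin (Real.pi + u) := by
        have := Real.sin_pi_sub (-u)
        simp only [sub_neg_eq_add, Real.sin_neg] at this
        linarith
      have h3' : Real.pi * ε / 2 ≤ Real.pi + u := by
        rw [_root_.abs_of_nonneg (by linarith)] at h3; linarith
      have hb : |Real.pi + u| ≤ Real.pi / 2 := by
        rw [_root_.abs_of_nonneg (by linarith)]; linarith
      have hs := Real.mul_abs_le_abs_sin hb
      have habs : |Real.sin (Real.pi + u)| = |Real.sin u| := by
        rw [hsu, abs_neg]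
      rw [habs] at hs
      have : ε ≤ 2 / Real.pi * |Real.pi + u| := by
        rw [← key]
        exact mul_le_mul_of_nonneg_left
          (by rw [_root_.abs_of_nonneg (by linarith)]; exact h3') (by positivity)
      linarith

lemma arc_bound (z : ℂ) (ε : ℝ) (hε : 0 < ε) :
    volume {θ : ℝ | θ ∈ Set.Icc (0:ℝ) (2 * Real.pi) ∧
      ‖Complex.exp (θ * Complex.I) - z‖ < ε}
      ≤ ENNReal.ofReal (6 * Real.pi * ε) := by
  have hπ := Real.pi_pos
  set S := {θ : ℝ | θ ∈ Set.Icc (0:ℝ) (2 * Real.pi) ∧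
      ‖Complex.exp (θ * Complex.I) - z‖ < ε} with hS
  rcases le_or_gt 1 ε with hε1 | hε1
  · calc volume S ≤ volume (Set.Icc (0:ℝ) (2 * Real.pi)) :=
          measure_mono fun θ hθ => hθ.1
      _ = ENNReal.ofReal (2 * Real.pi) := by
          rw [Real.volume_Icc]; ring_nf
      _ ≤ ENNReal.ofReal (6 * Real.pi * ε) := by
          apply ENNReal.ofReal_le_ofReal; nlinarith
  rcases Set.eq_empty_or_nonempty S with he | ⟨θ₀, hθ₀⟩
  · rw [he]; simp
  have hsub : S ⊆ Metric.ball θ₀ (Real.pi * ε) ∪ Metric.ball (θ₀ + 2 * Real.pi) (Real.pi * ε)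
      ∪ Metric.ball (θ₀ - 2 * Real.pi) (Real.pi * ε) := by
    intro θ hθ
    have hd : ‖Complex.exp (θ * Complex.I) - Complex.exp (θ₀ * Complex.I)‖ < 2 * ε := by
      calc ‖Complex.exp (θ * Complex.I) - Complex.exp (θ₀ * Complex.I)‖
          ≤ ‖Complex.exp (θ * Complex.I) - z‖
            + ‖z - Complex.exp (θ₀ * Complex.I)‖ := by
            simpa using norm_sub_le_norm_sub_add_norm_sub (Complex.exp (θ * Complex.I)) z
              (Complex.exp (θ₀ * Complex.I))
        _ < ε + ε := by
            apply add_lt_add hθ.2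
            rw [← norm_neg]; simpa using hθ₀.2
        _ = 2 * ε := by ring
    rw [chord_eq] at hd
    have hsin : |Real.sin ((θ - θ₀) / 2)| < ε := by linarith
    have hub : |(θ - θ₀) / 2| ≤ Real.pi := by
      obtain ⟨⟨ha, hb⟩, -⟩ := hθ
      obtain ⟨⟨ha', hb'⟩, -⟩ := hθ₀
      rw [abs_div, _root_.abs_two, div_le_iff₀ (by norm_num)]
      rw [abs_le]; constructor <;> linarith
    rcases sin_small _ _ hub hε hsin with h | h | h
    · left; left
      rw [Metric.mem_ball, Real.dist_eq]
      rw [abs_div, _root_.abs_two, div_lt_iff₀ (by norm_num)] at h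
      have : |θ - θ₀| < Real.pi * ε := by linarith
      exact this
    · left; right
      rw [Metric.mem_ball, Real.dist_eq]
      have : |(θ - θ₀) / 2 - Real.pi| < Real.pi * ε / 2 := h
      rw [abs_lt] at this ⊢
      constructor <;> [linarith; linarith]
    · right
      rw [Metric.mem_ball, Real.dist_eq]
      have : |(θ - θ₀) / 2 + Real.pi| < Real.pi * ε / 2 := h
      rw [abs_lt] at this ⊢
      constructor <;> [linarith; linarith]
  calc volume S ≤ volume (Metric.ball θ₀ (Real.pi * ε)
        ∪ Metric.ball (θ₀ + 2 * Real.pi) (Real.pi * ε)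
        ∪ Metric.ball (θ₀ - 2 * Real.pi) (Real.pi * ε)) := measure_mono hsub
    _ ≤ volume (Metric.ball θ₀ (Real.pi * ε) ∪ Metric.ball (θ₀ + 2 * Real.pi) (Real.pi * ε))
        + volume (Metric.ball (θ₀ - 2 * Real.pi) (Real.pi * ε)) := measure_union_le _ _
    _ ≤ (volume (Metric.ball θ₀ (Real.pi * ε)) + volume (Metric.ball (θ₀ + 2 * Real.pi) (Real.pi * ε)))
        + volume (Metric.ball (θ₀ - 2 * Real.pi) (Real.pi * ε)) := by
        gcongr; exact measure_union_le _ _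
    _ = ENNReal.ofReal (2 * (Real.pi * ε)) + ENNReal.ofReal (2 * (Real.pi * ε))
        + ENNReal.ofReal (2 * (Real.pi * ε)) := by rw [Real.volume_ball, Real.volume_ball, Real.volume_ball]
    _ = ENNReal.ofReal (6 * Real.pi * ε) := by
        rw [← ENNReal.ofReal_add (by positivity) (by positivity),
          ← ENNReal.ofReal_add (by positivity) (by positivity)]
        ring_nf

lemma multiset_pow_le_prod {s : Multiset ℝ} {ε : ℝ} (hε : 0 ≤ ε)
    (h : ∀ x ∈ s, ε ≤ x) : ε ^ Multiset.card s ≤ s.prod := by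
  induction s using Multiset.induction with
  | empty => simp
  | cons a t ih =>
    simp only [Multiset.card_cons, Multiset.prod_cons, pow_succ, mul_comm]
    have hat : ε ≤ a := h a (Multiset.mem_cons_self a t)
    have := ih (fun x hx => h x (Multiset.mem_cons_of_mem hx))
    exact mul_le_mul hat this (pow_nonneg hε _) (le_trans hε hat)

theorem stmt_1 (d : ℕ) (hd : 1 ≤ d) :
    ∃ C > 0, ∀ P : Polynomial ℂ, P.natDegree = d →
      ∀ δ : ℝ, 0 < δ →
        volume {θ : ℝ | θ ∈ Set.Icc (0:ℝ) (2 * Real.pi) ∧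
          ‖P.eval (Complex.exp (θ * Complex.I))‖ < δ}
        ≤ ENNReal.ofReal (C * (δ / ‖P.leadingCoeff‖) ^ ((1:ℝ) / d)) := by
  have hπ := Real.pi_pos
  refine ⟨6 * Real.pi * d, by positivity, fun P hPd δ hδ => ?_⟩
  have hP0 : P ≠ 0 := fun h => by simp [h] at hPd; omega
  have ha : 0 < ‖P.leadingCoeff‖ := by
    simpa using (Polynomial.leadingCoeff_ne_zero.mpr hP0)
  set a := ‖P.leadingCoeff‖ with haa
  set ε : ℝ := (δ / a) ^ ((1:ℝ) / d) with hε
  have hεpos : 0 < ε := Real.rpow_pos_of_pos (by positivity) _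
  have hεd : ε ^ d = δ / a := by
    rw [hε, one_div, Real.rpow_inv_natCast_pow (by positivity) (by omega)]
  have hsplit : P.Splits := IsAlgClosed.splits P
  have hcard : Multiset.card P.roots = d := by
    have := Polynomial.Splits.natDegree_eq_card_roots hsplit
    omega
  -- pointwise : small value implies near a root
  have hpt : ∀ θ : ℝ, ‖P.eval (Complex.exp (θ * Complex.I))‖ < δ →
      ∃ z ∈ P.roots.toFinset, ‖Complex.exp (θ * Complex.I) - z‖ < ε := by
    intro θ hθ
    set w := Complex.exp (θ * Complex.I)
    by_contra hc
    push_neg at hc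
    have hall : ∀ z ∈ P.roots, ε ≤ ‖w - z‖ := fun z hz =>
      hc z (Multiset.mem_toFinset.mpr hz)
    have heval : ‖P.eval w‖
        = a * (P.roots.map (fun z => ‖w - z‖)).prod := by
      conv_lhs => rw [Polynomial.Splits.eq_prod_roots hsplit]
      rw [Polynomial.eval_mul, Polynomial.eval_C, norm_mul,
        Polynomial.eval_multiset_prod, Multiset.map_map,
        ← normHom_apply (α := ℂ) (Multiset.prod _), map_multiset_prod, Multiset.map_map]
      congr 1
      simp [Function.comp_def]
    have hprod : ε ^ d ≤ (P.roots.map (fun z => ‖w - z‖)).prod := by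
      have := multiset_pow_le_prod (s := P.roots.map (fun z => ‖w - z‖))
        hεpos.le (by
          intro x hx
          obtain ⟨z, hz, rfl⟩ := Multiset.mem_map.mp hx
          exact hall z hz)
      rwa [Multiset.card_map, hcard] at this
    have : δ ≤ ‖P.eval w‖ := by
      rw [heval]
      calc δ = a * (δ / a) := by field_simp
        _ = a * ε ^ d := by rw [hεd]
        _ ≤ a * (P.roots.map (fun z => ‖w - z‖)).prod := by
            exact mul_le_mul_of_nonneg_left hprod ha.le
    linarith
  -- subset of union of arcs
  have hsub : {θ : ℝ | θ ∈ Set.Icc (0:ℝ) (2 * Real.pi) ∧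
      ‖P.eval (Complex.exp (θ * Complex.I))‖ < δ}
      ⊆ ⋃ z ∈ P.roots.toFinset, {θ : ℝ | θ ∈ Set.Icc (0:ℝ) (2 * Real.pi) ∧
        ‖Complex.exp (θ * Complex.I) - z‖ < ε} := by
    intro θ ⟨h1, h2⟩
    obtain ⟨z, hz, hlt⟩ := hpt θ h2
    exact Set.mem_biUnion hz ⟨h1, hlt⟩
  calc volume _ ≤ volume (⋃ z ∈ P.roots.toFinset, {θ : ℝ | θ ∈ Set.Icc (0:ℝ) (2 * Real.pi) ∧
        ‖Complex.exp (θ * Complex.I) - z‖ < ε}) := measure_mono hsub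
    _ ≤ ∑ z ∈ P.roots.toFinset, volume {θ : ℝ | θ ∈ Set.Icc (0:ℝ) (2 * Real.pi) ∧
        ‖Complex.exp (θ * Complex.I) - z‖ < ε} := measure_biUnion_finset_le _ _
    _ ≤ ∑ z ∈ P.roots.toFinset, ENNReal.ofReal (6 * Real.pi * ε) := by
        exact Finset.sum_le_sum (fun z _ => arc_bound z ε hεpos)
    _ = (P.roots.toFinset.card : ENNReal) * ENNReal.ofReal (6 * Real.pi * ε) := by
        rw [Finset.sum_const, nsmul_eq_mul]
    _ ≤ (d : ENNReal) * ENNReal.ofReal (6 * Real.pi * ε) := by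
        gcongr
        exact_mod_cast hcard ▸ Multiset.toFinset_card_le P.roots
    _ = ENNReal.ofReal (6 * Real.pi * d * ε) := by
        rw [← ENNReal.ofReal_natCast d, ← ENNReal.ofReal_mul (by positivity)]
        ring_nf
end

section
/- Let $a : \mathbb{N} \to \mathbb{R}$ be a sequence such that $a(m) < 0$ for some $m$, and such that the set $\{m \leq x : a(m) \neq 0\}$ has cardinality $\geq c x$ for all sufficiently large $x$ (some $c > 0$). Suppose moreover that $a$ is multiplicative. Then there exist infinitely many $m$ with $a(m) a(m') < 0$ for consecutive nonzero terms, i.e. the sequence of nonzero values of $a$ changes sign infinitely often. -/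
lemma decomp_aux (s m0 : ℕ) (hs : s ≠ 0) (hm0 : m0 ≠ 0) :
    ∃ u v w x : ℕ, s = u * x ∧ u = v * v * w ∧ Nat.Coprime u x ∧
      Nat.Coprime x m0 ∧ w ∣ m0 ∧ v * v ∣ s := by
  classical
  set F := s.primeFactors ∩ m0.primeFactors with hF
  set G := s.primeFactors \ m0.primeFactors with hG
  set u := ∏ p ∈ F, p ^ s.factorization p with hu
  set v := ∏ p ∈ F, p ^ (s.factorization p / 2) with hv
  set w := ∏ p ∈ F, p ^ (s.factorization p % 2) with hw
  set x := ∏ p ∈ G, p ^ s.factorization p with hx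
  have hdisj : Disjoint F G :=
    Finset.disjoint_of_subset_left Finset.inter_subset_right Finset.sdiff_disjoint.symm
  have hsu : s = u * x := by
    have h1 : s.factorization.prod (· ^ ·) = s := Nat.factorization_prod_pow_eq_self hs
    rw [Finsupp.prod, Nat.support_factorization] at h1
    have h2 : F ∪ G = s.primeFactors := by rw [hF, hG]; exact sup_inf_sdiff _ _
    calc s = ∏ p ∈ F ∪ G, p ^ s.factorization p := by rw [h2, h1]
      _ = u * x := Finset.prod_union hdisj
  have huvw : u = v * v * w := by
    rw [hu, hv, hw, ← Finset.prod_mul_distrib, ← Finset.prod_mul_distrib]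
    refine Finset.prod_congr rfl fun p hp => ?_
    rw [← pow_add, ← pow_add]
    congr 1
    omega
  have hvvu : v * v ∣ u := by
    rw [huvw]; exact Dvd.intro w rfl
  refine ⟨u, v, w, x, hsu, huvw, ?_, ?_, ?_, hvvu.trans ⟨x, hsu⟩⟩
  · refine Nat.Coprime.prod_left fun p hp => Nat.Coprime.prod_right fun q hq => ?_
    have hp' : p.Prime := Nat.prime_of_mem_primeFactors (Finset.mem_of_mem_inter_left hp)
    have hq' : q.Prime := Nat.prime_of_mem_primeFactors (Finset.mem_sdiff.mp hq).1
    have hne : p ≠ q := by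
      intro h
      subst h
      exact (Finset.mem_sdiff.mp hq).2 (Finset.mem_of_mem_inter_right hp)
    exact Nat.Coprime.pow _ _ ((Nat.coprime_primes hp' hq').mpr hne)
  · refine Nat.Coprime.prod_left fun p hp => Nat.Coprime.pow_left _ ?_
    have hp' : p.Prime := Nat.prime_of_mem_primeFactors (Finset.mem_sdiff.mp hp).1
    refine (Nat.Prime.coprime_iff_not_dvd hp').mpr fun hd => ?_
    exact (Finset.mem_sdiff.mp hp).2 (Nat.mem_primeFactors.mpr ⟨hp', hd, hm0⟩)
  · refine dvd_trans ?_ (dvd_trans (Finset.prod_dvd_prod_of_subset F m0.primeFactors _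
      Finset.inter_subset_right) (Nat.prod_primeFactors_dvd m0))
    exact Finset.prod_dvd_prod_of_dvd _ _ fun p hp => by
      have h3 : s.factorization p % 2 ≤ 1 := by omega
      calc p ^ (s.factorization p % 2) ∣ p ^ 1 := pow_dvd_pow p h3
        _ = p := pow_one p


lemma between_aux (a : ℕ → ℝ) : ∀ d p q : ℕ, p < q → q ≤ p + d → a p * a q < 0 →
    ∃ m m' : ℕ, p ≤ m ∧ m < m' ∧ m' ≤ q ∧ a m * a m' < 0 ∧
      ∀ k : ℕ, m < k → k < m' → a k = 0 := by
  intro d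
  induction d with
  | zero => intro p q h1 h2; omega
  | succ d ih =>
    intro p q h1 h2 hneg
    by_cases hz : ∀ k, p < k → k < q → a k = 0
    · exact ⟨p, q, le_refl _, h1, le_refl _, hneg, hz⟩
    · push_neg at hz
      obtain ⟨k, hk1, hk2, hk⟩ := hz
      have hkk : 0 < a k * a k := mul_self_pos.mpr hk
      rcases lt_trichotomy (a p * a k) 0 with h | h | h
      · obtain ⟨m, m', h3, h4, h5, h6, h7⟩ := ih p k hk1 (by omega) h
        exact ⟨m, m', h3, h4, le_trans h5 hk2.le, h6, h7⟩
      · exfalso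
        rcases mul_eq_zero.mp h with h' | h'
        · rw [h'] at hneg; simp at hneg
        · exact hk h'
      · have hq : a k * a q < 0 := by nlinarith
        obtain ⟨m, m', h3, h4, h5, h6, h7⟩ := ih k q hk2 (by omega) hq
        exact ⟨m, m', le_trans hk1.le h3, h4, h5, h6, h7⟩

lemma claimC (a : ℕ → ℝ) (hmul : ∀ m n : ℕ, Nat.Coprime m n → a (m * n) = a m * a n)
    (m0 : ℕ) (hm0 : m0 ≠ 0)
    (hdens : ∃ c > (0:ℝ), ∃ N₀ : ℕ, ∀ N : ℕ, N₀ ≤ N →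
      c * N ≤ ((Finset.Icc 1 N).filter (fun m => a m ≠ 0)).card) :
    ∀ M : ℕ, ∃ x : ℕ, M < x ∧ Nat.Coprime x m0 ∧ a x ≠ 0 := by
  by_contra hcon
  push_neg at hcon
  obtain ⟨M, hM⟩ := hcon
  obtain ⟨c, hc, N₀, hN⟩ := hdens
  set M' := max M 1 with hM'
  -- choose a large n
  obtain ⟨n, hn⟩ := exists_nat_gt (max (max (N₀ : ℝ) 1) (2 * ((m0 : ℝ) * M') / c))
  have hn0 : (N₀ : ℝ) < n := lt_of_le_of_lt (le_max_left _ _ |>.trans (le_max_left _ _)) hn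
  have hn1 : (1 : ℝ) ≤ n := le_of_lt (lt_of_le_of_lt ((le_max_right _ _).trans (le_max_left _ _)) hn)
  have hn2 : 2 * ((m0 : ℝ) * M') < c * n := by
    have := lt_of_le_of_lt (le_max_right _ _) hn
    rw [div_lt_iff₀ hc] at this
    linarith [this]
  have hnN : N₀ ≤ n ^ 2 := by
    have h1 : N₀ ≤ n := by exact_mod_cast hn0.le
    have h2 : n ≤ n ^ 2 := Nat.le_self_pow (by norm_num) n
    omega
  set S := (Finset.Icc 1 (n ^ 2)).filter (fun m => a m ≠ 0) with hS
  set T := Finset.range (n + 1) ×ˢ (Finset.Icc 1 m0 ×ˢ Finset.Icc 1 M') with hT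
  have hdec : ∀ s : ℕ, ∃ t : ℕ × ℕ × ℕ, s ∈ S →
      (s = t.1 * t.1 * t.2.1 * t.2.2 ∧ t ∈ T) := by
    intro s
    by_cases hsS : s ∈ S
    swap
    · exact ⟨(0, 0, 0), fun h => absurd h hsS⟩
    have hmem := Finset.mem_filter.mp hsS
    have hsIcc := Finset.mem_Icc.mp hmem.1
    have hsne : s ≠ 0 := by omega
    have hane : a s ≠ 0 := hmem.2
    obtain ⟨u, v, w, x, h1, h2, h3, h4, h5, h6⟩ := decomp_aux s m0 hsne hm0
    refine ⟨(v, w, x), fun _ => ⟨by rw [h1, h2], ?_⟩⟩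
    have hax : a x ≠ 0 := by
      intro h
      apply hane
      rw [h1, hmul u x h3, h, mul_zero]
    have hx0 : x ≠ 0 := by rintro rfl; exact hsne (by rw [h1, mul_zero])
    have hxM : x ≤ M := by
      by_contra hgt
      exact hax (hM x (by omega) h4)
    have hw1 : 1 ≤ w := Nat.pos_of_dvd_of_pos h5 (Nat.pos_of_ne_zero hm0)
    have hwm : w ≤ m0 := Nat.le_of_dvd (Nat.pos_of_ne_zero hm0) h5
    have hvv : v * v ≤ n ^ 2 := le_trans (Nat.le_of_dvd (by omega) h6) hsIcc.2
    have hvn : v ≤ n := by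
      by_contra hlt
      push_neg at hlt
      have := Nat.mul_le_mul hlt hlt
      nlinarith
    simp only [hT, Finset.mem_product, Finset.mem_range, Finset.mem_Icc]
    exact ⟨by omega, ⟨hw1, hwm⟩, ⟨by omega, le_trans hxM (le_max_left _ _)⟩⟩
  choose f hf using hdec
  have hcard : S.card ≤ T.card := by
    refine Finset.card_le_card_of_injOn f (fun s hs => (hf s hs).2) ?_
    intro s1 h1 s2 h2 he
    rw [(hf s1 h1).1, (hf s2 h2).1, he]
  have hTcard : T.card = (n + 1) * (m0 * M') := by
    simp [hT, Finset.card_product, Nat.card_Icc]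
  have hbound := hN (n ^ 2) hnN
  rw [← hS] at hbound
  have hfin : (S.card : ℝ) ≤ (n + 1) * ((m0 : ℝ) * M') := by
    rw [hTcard] at hcard
    exact_mod_cast hcard
  have hM'0 : (0:ℝ) ≤ (m0 : ℝ) * M' := by positivity
  have hcast : ((n ^ 2 : ℕ) : ℝ) = (n : ℝ) ^ 2 := by push_cast; ring
  rw [hcast] at hbound
  nlinarith [hbound, hfin, hn2, hn1, hc, hM'0,
    mul_nonneg (sub_nonneg.mpr hn1) hM'0]

theorem stmt_14 (a : ℕ → ℝ) (ha1 : a 1 = 1)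
    (hmul : ∀ m n : ℕ, Nat.Coprime m n → a (m * n) = a m * a n)
    (hneg : ∃ m : ℕ, 1 ≤ m ∧ a m < 0)
    (hdens : ∃ c > (0:ℝ), ∃ N₀ : ℕ, ∀ N : ℕ, N₀ ≤ N →
      c * N ≤ ((Finset.Icc 1 N).filter (fun m => a m ≠ 0)).card) :
    ∀ N : ℕ, ∃ m m' : ℕ, N < m ∧ m < m' ∧ a m * a m' < 0 ∧
      ∀ k : ℕ, m < k → k < m' → a k = 0 := by
  intro N
  obtain ⟨m0, hm01, hm0neg⟩ := hneg
  have hm02 : 2 ≤ m0 := by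
    rcases Nat.lt_or_ge m0 2 with h | h
    · interval_cases m0
      · linarith [ha1]
    · exact h
  obtain ⟨x, hxN, hxcop, hxne⟩ := claimC a hmul m0 (by omega) hdens N
  have hx1 : 1 ≤ x := by omega
  have hlt : x < m0 * x := by nlinarith
  have hneg2 : a x * a (m0 * x) < 0 := by
    rw [hmul m0 x hxcop.symm]
    nlinarith [mul_self_pos.mpr hxne]
  obtain ⟨m, m', h1, h2, h3, h4, h5⟩ :=
    between_aux a (m0 * x - x) x (m0 * x) hlt (by omega) hneg2
  exact ⟨m, m', by omega, h2, h4, h5⟩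
end
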